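/- In the missing-labels model with ᾱ = max_{y<m} α^{(y)} < 1, if the class of functions F satisfies Assumption 1, then the neural network distance satisfies d_F(P, Q) ≤ ((1 + ᾱ)/(1 − ᾱ)) · d_F(P̃, Q̃). (Corollary 1, eq. (12).) -/

import Mathlib

open scoped BigOperators
open MeasureTheory

/-- `P` is a probability mass function on `Z`. -/
def IsPMF {Z : Type*} (P : Z → ℝ) : Prop :=
  (∀ z, 0 ≤ P z) ∧ Summable P ∧ ∑' z, P z = 1

/-- The corrupted labeled distribution obtained by passing labels through the channel `C`:
`P̃(x,ỹ) = ∑ j, P(x,j) · C j ỹ`. -/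
noncomputable def corrupt {X : Type*} {k : ℕ} (P : X × Fin k → ℝ)
    (C : Matrix (Fin k) (Fin k) ℝ) : X × Fin k → ℝ :=
  fun z => ∑ j, P (z.1, j) * C j z.2

/-- The missing-labels parameter vector on `Fin (m+1)`: `α^{(y)}` on class labels, `0` on
the missing-label symbol `m`. -/
noncomputable def missAlpha (m : ℕ) (αv : Fin m → ℝ) : Fin (m + 1) → ℝ :=
  fun i => if h : (i : ℕ) < m then αv ⟨i, h⟩ else 0

/-- Confusion matrix of the missing-labels model:
`C = diag(𝟙 − α_m) + α_m e_m^T`. -/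
noncomputable def missConfusion (m : ℕ) (αv : Fin m → ℝ) :
    Matrix (Fin (m + 1)) (Fin (m + 1)) ℝ :=
  Matrix.diagonal (fun i => 1 - missAlpha m αv i) +
    Matrix.vecMulVec (missAlpha m αv) (Pi.single (Fin.last m) 1)

/-- `‖T‖_∞ = max_i ∑_j |T i j|` for a square real matrix. -/
noncomputable def matInfNorm {k : ℕ} (T : Matrix (Fin k) (Fin k) ℝ) : ℝ :=
  ⨆ i, ∑ j, |T i j|

/-- `(T ∘ f)(x, y) = ∑_ỹ T y ỹ · f (x, ỹ)`. -/
def chanOp {X : Type*} {k : ℕ} (T : Matrix (Fin k) (Fin k) ℝ)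
    (f : X × Fin k → ℝ) : X × Fin k → ℝ :=
  fun z => ∑ j, T z.2 j * f (z.1, j)

/-- Assumption 1: `F = F₁ + F₂ + constants`, where `F₁` is invariant under the action of
matrices of unit `∞`-norm, and `F₂` consists of `[0,1]`-scalings of label-independent
functions from a class `F₂'`. -/
def Assumption1 {X : Type*} {k : ℕ} (F : Set (X × Fin k → ℝ)) : Prop :=
  ∃ F1 F2 : Set (X × Fin k → ℝ),
    F = {f | ∃ f1 ∈ F1, ∃ f2 ∈ F2, ∃ c : ℝ, f = f1 + f2 + Function.const _ c} ∧
    (∀ T : Matrix (Fin k) (Fin k) ℝ, matInfNorm T = 1 → ∀ f ∈ F1, chanOp T f ∈ F1) ∧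
    (∃ F2' : Set (X → ℝ),
      F2 = {h | ∃ g ∈ F2', ∃ a : ℝ, 0 ≤ a ∧ a ≤ 1 ∧ h = fun z => a * g z.1})

/-- Neural network distance w.r.t. a class `F` of discriminators:
`d_F(P, Q) = sup_{f ∈ F} (E_P[f] − E_Q[f])`. -/
noncomputable def nnDist {X : Type*} {k : ℕ} (F : Set (X × Fin k → ℝ))
    (P Q : X × Fin k → ℝ) : ℝ :=
  sSup ((fun f => (∑' z, P z * f z) - ∑' z, Q z * f z) '' F)

/-! ### Auxiliary summability lemmas -/

section helpers
variable {X : Type*} [Countable X] {k : ℕ}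

lemma summable_mul_bounded {Z : Type*} (p : Z → ℝ) (hp : Summable p)
    (hpnn : ∀ z, 0 ≤ p z) (g : Z → ℝ) (B : ℝ) (hB : ∀ z, |g z| ≤ B) :
    Summable (fun z => p z * g z) := by
  apply Summable.of_abs
  apply Summable.of_nonneg_of_le (fun z => abs_nonneg _) (fun z => ?_) (hp.mul_right B)
  rw [abs_mul, abs_of_nonneg (hpnn z)]
  exact mul_le_mul_of_nonneg_left (hB z) (hpnn z)

omit [Countable X] in
lemma summable_fst (h : X → ℝ) (hnn : ∀ x, 0 ≤ h x) (hs : Summable h) :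
    Summable (fun z : X × Fin k => h z.1) := by
  rw [summable_prod_of_nonneg (fun p => hnn p.1)]
  refine ⟨fun x => Summable.of_finite, ?_⟩
  have : (fun x : X => ∑' _ : Fin k, h x) = fun x => (k : ℝ) * h x := by
    funext x
    simp [tsum_fintype, Finset.sum_const, nsmul_eq_mul]
  rw [this]
  exact hs.mul_left _

omit [Countable X] in
lemma summable_corrupt (P : X × Fin k → ℝ) (hPnn : ∀ z, 0 ≤ P z) (hPs : Summable P)
    (C : Matrix (Fin k) (Fin k) ℝ) : Summable (corrupt P C) := by
  have key : ∀ j : Fin k, Summable (fun z : X × Fin k => P (z.1, j) * C j z.2) := by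
    intro j
    have h1 : Summable (fun z : X × Fin k => P (z.1, j)) := by
      apply summable_fst (fun x => P (x, j)) (fun x => hPnn _)
      exact hPs.comp_injective (fun a b hab => by simpa using hab)
    refine summable_mul_bounded _ h1 (fun z => hPnn _) (fun z => C j z.2) (∑ y, |C j y|) ?_
    exact fun z => Finset.single_le_sum (f := fun y => |C j y|) (fun y _ => abs_nonneg _)
      (Finset.mem_univ z.2)
  exact summable_sum (fun j _ => key j)

omit [Countable X] in
lemma corrupt_nonneg (P : X × Fin k → ℝ) (hPnn : ∀ z, 0 ≤ P z)
    (C : Matrix (Fin k) (Fin k) ℝ) (hC : ∀ i j, 0 ≤ C i j) (z : X × Fin k) :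
    0 ≤ corrupt P C z :=
  Finset.sum_nonneg fun j _ => mul_nonneg (hPnn _) (hC _ _)

omit [Countable X] in
lemma chanOp_bound (T : Matrix (Fin k) (Fin k) ℝ) (f : X × Fin k → ℝ) (B : ℝ)
    (hf : ∀ z, |f z| ≤ B) (z : X × Fin k) :
    |chanOp T f z| ≤ (∑ i, ∑ j, |T i j|) * B := by
  have hB : 0 ≤ B := le_trans (abs_nonneg _) (hf z)
  calc |chanOp T f z| ≤ ∑ j, |T z.2 j * f (z.1, j)| := Finset.abs_sum_le_sum_abs _ _
    _ ≤ ∑ j, |T z.2 j| * B := by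
        refine Finset.sum_le_sum fun j _ => ?_
        rw [abs_mul]; exact mul_le_mul_of_nonneg_left (hf _) (abs_nonneg _)
    _ = (∑ j, |T z.2 j|) * B := (Finset.sum_mul _ _ _).symm
    _ ≤ (∑ i, ∑ j, |T i j|) * B := by
        refine mul_le_mul_of_nonneg_right ?_ hB
        exact Finset.single_le_sum (f := fun i => ∑ j, |T i j|)
          (fun i _ => Finset.sum_nonneg fun j _ => abs_nonneg _) (Finset.mem_univ z.2)

lemma E_corrupt (P : X × Fin k → ℝ) (hPnn : ∀ z, 0 ≤ P z) (hPs : Summable P)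
    (C : Matrix (Fin k) (Fin k) ℝ) (f : X × Fin k → ℝ) (B : ℝ) (hf : ∀ z, |f z| ≤ B) :
    ∑' z, corrupt P C z * f z = ∑' z, P z * chanOp C f z := by
  have h1 : Summable (fun z : X × Fin k => corrupt P C z * f z) := by
    have key : ∀ j : Fin k, Summable (fun z : X × Fin k => P (z.1, j) * C j z.2 * f z) := by
      intro j
      have h1 : Summable (fun z : X × Fin k => P (z.1, j)) := by
        apply summable_fst (fun x => P (x, j)) (fun x => hPnn _)
        exact hPs.comp_injective (fun a b hab => by simpa using hab)
      have hb : ∀ z : X × Fin k, |C j z.2 * f z| ≤ (∑ y, |C j y|) * B := by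
        intro z
        rw [abs_mul]
        have h2 : |C j z.2| ≤ ∑ y, |C j y| :=
          Finset.single_le_sum (f := fun y => |C j y|) (fun y _ => abs_nonneg _)
            (Finset.mem_univ z.2)
        exact mul_le_mul h2 (hf z) (abs_nonneg _)
          (Finset.sum_nonneg fun y _ => abs_nonneg _)
      have := summable_mul_bounded _ h1 (fun z => hPnn _) _ _ hb
      simpa [mul_assoc] using this
    have he : (fun z : X × Fin k => corrupt P C z * f z)
        = fun z => ∑ j, P (z.1, j) * C j z.2 * f z := by
      funext z
      exact Finset.sum_mul _ _ _
    rw [he]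
    exact summable_sum (fun j _ => key j)
  have h2 : Summable (fun z : X × Fin k => P z * chanOp C f z) :=
    summable_mul_bounded _ hPs hPnn _ _ (chanOp_bound C f B hf)
  rw [Summable.tsum_prod' h1 (fun b => Summable.of_finite), Summable.tsum_prod' h2 (fun b => Summable.of_finite)]
  refine tsum_congr fun x => ?_
  rw [tsum_fintype, tsum_fintype]
  simp only [corrupt, chanOp, Finset.sum_mul, Finset.mul_sum, mul_assoc]
  exact Finset.sum_comm

end helpers

/-! ### The inverse of the missing-labels confusion matrix -/

noncomputable def missInv (m : ℕ) (αv : Fin m → ℝ) : Matrix (Fin (m + 1)) (Fin (m + 1)) ℝ :=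
  Matrix.of fun i j => (if i = j then (1 - missAlpha m αv i)⁻¹ else 0) +
    (if j = Fin.last m then -(missAlpha m αv i) * (1 - missAlpha m αv i)⁻¹ else 0)

section matrices
variable {m : ℕ} (αv : Fin m → ℝ)

lemma missAlpha_last : missAlpha m αv (Fin.last m) = 0 := by
  simp [missAlpha]

lemma missAlpha_castSucc (y : Fin m) : missAlpha m αv y.castSucc = αv y := by
  simp only [missAlpha, Fin.coe_castSucc]
  rw [dif_pos y.isLt]

lemma missConfusion_apply (i j : Fin (m + 1)) : missConfusion m αv i j =
    (if i = j then 1 - missAlpha m αv i else 0) +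
    (if j = Fin.last m then missAlpha m αv i else 0) := by
  simp [missConfusion, Matrix.diagonal_apply, Matrix.vecMulVec_apply, Pi.single_apply, mul_ite]

lemma missInv_last (k : Fin (m + 1)) :
    missInv m αv (Fin.last m) k = if Fin.last m = k then 1 else 0 := by
  simp [missInv, missAlpha_last]

lemma missConfusion_mul_missInv (ha1 : ∀ i, missAlpha m αv i < 1) :
    missConfusion m αv * missInv m αv = 1 := by
  ext i k
  have h0 : (1 : ℝ) - missAlpha m αv i ≠ 0 := ne_of_gt (sub_pos.2 (ha1 i))
  rw [Matrix.mul_apply]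
  simp only [missConfusion_apply, add_mul, ite_mul, zero_mul, Finset.sum_add_distrib,
    Finset.sum_ite_eq, Finset.sum_ite_eq', Finset.mem_univ, if_true]
  rw [Matrix.one_apply, missInv_last]
  simp only [missInv, Matrix.of_apply]
  by_cases hik : i = k
  · subst hik
    by_cases hil : i = Fin.last m
    · subst hil
      simp [missAlpha_last]
    · have hli : ¬ (Fin.last m = i) := fun h => hil h.symm
      simp only [if_pos rfl, if_neg hil, if_neg hli, add_zero, mul_zero, add_zero]
      rw [if_pos trivial, if_pos trivial]
      field_simp
  · by_cases hkl : k = Fin.last m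
    · subst hkl
      simp [hik]
      linear_combination (-missAlpha m αv i) * mul_inv_cancel₀ h0
    · have hlk : ¬ (Fin.last m = k) := fun h => hkl h.symm
      simp [hik, hkl, hlk]

lemma rowabs_missInv (ha0 : ∀ i, 0 ≤ missAlpha m αv i) (ha1 : ∀ i, missAlpha m αv i < 1)
    (i : Fin (m + 1)) :
    ∑ j, |missInv m αv i j| = (1 + missAlpha m αv i) / (1 - missAlpha m αv i) := by
  have hpos : (0:ℝ) < 1 - missAlpha m αv i := sub_pos.2 (ha1 i)
  have hpt : ∀ j, |missInv m αv i j| =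
      (if i = j then (1 - missAlpha m αv i)⁻¹ else 0) +
      (if j = Fin.last m then missAlpha m αv i * (1 - missAlpha m αv i)⁻¹ else 0) := by
    intro j
    by_cases h1 : i = j <;> by_cases h2 : j = Fin.last m
    · subst h1; subst h2
      simp [missInv, missAlpha_last]
    · subst h1
      simp only [missInv, Matrix.of_apply, if_pos rfl, if_neg h2, add_zero]
      exact abs_of_pos (inv_pos.2 hpos)
    · subst h2
      have hv : missInv m αv i (Fin.last m)
          = -(missAlpha m αv i * (1 - missAlpha m αv i)⁻¹) := by
        simp [missInv, h1]
      rw [hv, abs_neg, abs_mul, abs_of_nonneg (ha0 i), abs_of_nonneg (inv_pos.2 hpos).le]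
      simp [h1]
    · simp [missInv, h1, h2]
  simp only [hpt, Finset.sum_add_distrib, Finset.sum_ite_eq, Finset.sum_ite_eq',
    Finset.mem_univ, if_true]
  field_simp

lemma row_missConfusion (i : Fin (m + 1)) : ∑ j, missConfusion m αv i j = 1 := by
  simp only [missConfusion_apply, Finset.sum_add_distrib, Finset.sum_ite_eq,
    Finset.sum_ite_eq', Finset.mem_univ, if_true]
  ring

lemma rowabs_missConfusion (ha0 : ∀ i, 0 ≤ missAlpha m αv i)
    (ha1 : ∀ i, missAlpha m αv i ≤ 1) (i : Fin (m + 1)) :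
    ∑ j, |missConfusion m αv i j| = 1 := by
  have hpt : ∀ j, |missConfusion m αv i j| = missConfusion m αv i j := by
    intro j
    apply abs_of_nonneg
    rw [missConfusion_apply]
    have h1 := ha0 i
    have h2 := ha1 i
    split_ifs <;> linarith
  rw [Finset.sum_congr rfl (fun j _ => hpt j)]
  exact row_missConfusion αv i

end matrices

/-! ### Algebraic properties of `chanOp` -/

section chan
variable {X : Type*} {k : ℕ}

lemma chanOp_one (f : X × Fin k → ℝ) : chanOp 1 f = f := by
  funext z
  simp [chanOp, Matrix.one_apply, ite_mul, Finset.sum_ite_eq]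

lemma chanOp_chanOp (M N : Matrix (Fin k) (Fin k) ℝ) (f : X × Fin k → ℝ) :
    chanOp M (chanOp N f) = chanOp (M * N) f := by
  funext z
  simp only [chanOp, Matrix.mul_apply, Finset.sum_mul, Finset.mul_sum, mul_assoc]
  exact Finset.sum_comm

lemma chanOp_add (M : Matrix (Fin k) (Fin k) ℝ) (f g : X × Fin k → ℝ) :
    chanOp M (f + g) = chanOp M f + chanOp M g := by
  funext z
  simp [chanOp, mul_add, Finset.sum_add_distrib]

lemma chanOp_fst (M : Matrix (Fin k) (Fin k) ℝ) (hrow : ∀ i, ∑ j, M i j = 1) (u : X → ℝ) :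
    chanOp M (fun z => u z.1) = fun z => u z.1 := by
  funext z
  show ∑ j, M z.2 j * u z.1 = u z.1
  rw [← Finset.sum_mul, hrow, one_mul]

lemma chanOp_smul (b : ℝ) (M : Matrix (Fin k) (Fin k) ℝ) (f : X × Fin k → ℝ) :
    chanOp (b • M) f = fun z => b * chanOp M f z := by
  funext z
  simp [chanOp, Matrix.smul_apply, smul_eq_mul, Finset.mul_sum, mul_assoc]

end chan

theorem miss_nnDist_bound {X : Type*} [Countable X] {m : ℕ} (hm : 0 < m) (αv : Fin m → ℝ)
    (hαv0 : ∀ y, 0 ≤ αv y) (hαv1 : ∀ y, αv y ≤ 1)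
    (hbar : (⨆ y, αv y) < 1)
    (P Q : X × Fin (m + 1) → ℝ) (hP : IsPMF P) (hQ : IsPMF Q)
    (hPz : ∀ x : X, P (x, Fin.last m) = 0) (hQz : ∀ x : X, Q (x, Fin.last m) = 0)
    (F : Set (X × Fin (m + 1) → ℝ))
    (hFbd : ∀ f ∈ F, ∃ B : ℝ, ∀ z, |f z| ≤ B)
    (hF : Assumption1 F) :
    nnDist F P Q ≤ ((1 + ⨆ y, αv y) / (1 - ⨆ y, αv y)) *
      nnDist F (corrupt P (missConfusion m αv)) (corrupt Q (missConfusion m αv)) := by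
  classical
  obtain ⟨F1, F2, hFeq, hF1inv, F2', hF2eq⟩ := hF
  obtain ⟨hPnn, hPs, hP1⟩ := hP
  obtain ⟨hQnn, hQs, hQ1⟩ := hQ
  set ᾱ := ⨆ y, αv y with hᾱdef
  have hbdd : BddAbove (Set.range αv) := Set.Finite.bddAbove (Set.finite_range _)
  have hle : ∀ y, αv y ≤ ᾱ := fun y => le_ciSup hbdd y
  have hᾱ0 : 0 ≤ ᾱ := le_trans (hαv0 ⟨0, hm⟩) (hle _)
  have h1ᾱ : (0:ℝ) < 1 - ᾱ := by linarith
  set κ := (1 + ᾱ) / (1 - ᾱ) with hκdef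
  have hκ1 : 1 ≤ κ := by rw [hκdef, le_div_iff₀ h1ᾱ]; linarith
  have hκ0 : (0:ℝ) < κ := lt_of_lt_of_le one_pos hκ1
  have hκ0' : κ ≠ 0 := ne_of_gt hκ0
  have ha0 : ∀ i, 0 ≤ missAlpha m αv i := by
    intro i
    unfold missAlpha
    split
    · exact hαv0 _
    · exact le_refl 0
  have haᾱ : ∀ i, missAlpha m αv i ≤ ᾱ := by
    intro i
    unfold missAlpha
    split
    · exact hle _
    · exact hᾱ0
  have ha1 : ∀ i, missAlpha m αv i < 1 := fun i => lt_of_le_of_lt (haᾱ i) hbar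
  have ha1' : ∀ i, missAlpha m αv i ≤ 1 := fun i => (ha1 i).le
  set C := missConfusion m αv with hCdef
  set T : Matrix (Fin (m+1)) (Fin (m+1)) ℝ := κ⁻¹ • missInv m αv with hTdef
  have hCnn : ∀ i j, 0 ≤ C i j := by
    intro i j
    rw [hCdef, missConfusion_apply]
    have := ha0 i
    have := ha1' i
    split_ifs <;> linarith
  have hrowC : ∀ i, ∑ j, C i j = 1 := row_missConfusion αv
  have hCnorm : matInfNorm C = 1 := by
    unfold matInfNorm
    have h1 : ∀ i : Fin (m+1), ∑ j, |C i j| = 1 := rowabs_missConfusion αv ha0 ha1'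
    simp only [h1]
    exact ciSup_const
  -- the infinity norm of T is 1
  have hrowT : ∀ i, ∑ j, |T i j|
      = ((1 + missAlpha m αv i) / (1 - missAlpha m αv i)) / κ := by
    intro i
    have h1 : ∀ j, |T i j| = |missInv m αv i j| / κ := by
      intro j
      rw [hTdef, Matrix.smul_apply, smul_eq_mul, abs_mul, abs_of_nonneg (inv_nonneg.2 hκ0.le),
        inv_mul_eq_div]
    rw [Finset.sum_congr rfl (fun j _ => h1 j), ← Finset.sum_div, rowabs_missInv αv ha0 ha1]
  have hTnorm : matInfNorm T = 1 := by
    have hub : ∀ i, ∑ j, |T i j| ≤ 1 := by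
      intro i
      rw [hrowT i, div_le_one hκ0, hκdef, div_le_div_iff₀ (sub_pos.2 (ha1 i)) h1ᾱ]
      nlinarith [haᾱ i, ha0 i]
    haveI : Nonempty (Fin m) := ⟨⟨0, hm⟩⟩
    obtain ⟨y0, hy0⟩ := Finite.exists_max αv
    have hᾱy0 : αv y0 = ᾱ := le_antisymm (hle y0) (ciSup_le hy0)
    have hatt : ∑ j, |T y0.castSucc j| = 1 := by
      rw [hrowT, missAlpha_castSucc, hᾱy0, ← hκdef, div_self hκ0']
    unfold matInfNorm
    apply le_antisymm
    · exact ciSup_le hub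
    · calc (1:ℝ) = ∑ j, |T y0.castSucc j| := hatt.symm
        _ ≤ ⨆ i, ∑ j, |T i j| := le_ciSup (f := fun i => ∑ j, |T i j|)
            (Set.Finite.bddAbove (Set.finite_range _)) y0.castSucc
  have hCT : C * T = κ⁻¹ • 1 := by
    rw [hTdef, Matrix.mul_smul, hCdef, missConfusion_mul_missInv αv ha1]
  have hchanCT : ∀ f1 : X × Fin (m+1) → ℝ,
      chanOp C (chanOp T f1) = fun z => κ⁻¹ * f1 z := by
    intro f1
    rw [chanOp_chanOp, hCT, chanOp_smul, chanOp_one]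
  -- corrupted distributions
  set Pt := corrupt P C with hPtdef
  set Qt := corrupt Q C with hQtdef
  have hPtnn : ∀ z, 0 ≤ Pt z := corrupt_nonneg P hPnn C hCnn
  have hQtnn : ∀ z, 0 ≤ Qt z := corrupt_nonneg Q hQnn C hCnn
  have hPts : Summable Pt := summable_corrupt P hPnn hPs C
  have hQts : Summable Qt := summable_corrupt Q hQnn hQs C
  have htot : ∀ (R : X × Fin (m+1) → ℝ), (∀ z, 0 ≤ R z) → Summable R → (∑' z, R z = 1) →
      ∑' z, corrupt R C z = 1 := by
    intro R hRnn hRs hR1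
    have h1 : ∀ z : X × Fin (m+1),
        corrupt R C z = corrupt R C z * (fun _ : X × Fin (m+1) => (1:ℝ)) z := by
      intro z; simp
    rw [tsum_congr h1, E_corrupt R hRnn hRs C (fun _ => 1) 1 (by intro z; simp)]
    have h2 : ∀ z : X × Fin (m+1), R z * chanOp C (fun _ => (1:ℝ)) z = R z := by
      intro z
      have h3 : chanOp C (fun _ => (1:ℝ)) z = 1 := by
        show ∑ j, C z.2 j * 1 = 1
        simp only [mul_one]
        exact hrowC z.2
      rw [h3, mul_one]
    rw [tsum_congr h2, hR1]
  have hPt1 : ∑' z, Pt z = 1 := htot P hPnn hPs hP1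
  have hQt1 : ∑' z, Qt z = 1 := htot Q hQnn hQs hQ1
  -- splitting expectations of sums
  have hsplit : ∀ (R : X × Fin (m+1) → ℝ), (∀ z, 0 ≤ R z) → Summable R → (∑' z, R z = 1) →
      ∀ (h1 h2 : X × Fin (m+1) → ℝ) (B1 B2 : ℝ), (∀ z, |h1 z| ≤ B1) → (∀ z, |h2 z| ≤ B2) →
      ∀ c : ℝ, ∑' z, R z * (h1 z + h2 z + c)
        = (∑' z, R z * h1 z) + (∑' z, R z * h2 z) + c := by
    intro R hRnn hRs hR1 h1 h2 B1 B2 hB1 hB2 c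
    have s1 : Summable (fun z => R z * h1 z) := summable_mul_bounded _ hRs hRnn _ _ hB1
    have s2 : Summable (fun z => R z * h2 z) := summable_mul_bounded _ hRs hRnn _ _ hB2
    have s3 : Summable (fun z => R z * c) := hRs.mul_right c
    have he : (fun z => R z * (h1 z + h2 z + c))
        = fun z => (R z * h1 z + R z * h2 z) + R z * c := by
      funext z; ring
    rw [he, Summable.tsum_add (s1.add s2) s3, Summable.tsum_add s1 s2, tsum_mul_right, hR1, one_mul]
  -- Claim A
  have claimA : ∀ f ∈ F, ∃ f' ∈ F,
      ((∑' z, P z * f z) - ∑' z, Q z * f z)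
        = κ * ((∑' z, Pt z * f' z) - ∑' z, Qt z * f' z) := by
    intro f hfF
    have hfF' := hfF
    rw [hFeq] at hfF'
    obtain ⟨f1, hf1, f2, hf2, c, rfl⟩ := hfF'
    rw [hF2eq] at hf2
    obtain ⟨g, hg, aa, haa0, haa1, rfl⟩ := hf2
    obtain ⟨B, hB⟩ := hFbd _ hfF
    have hzero2 : (fun z : X × Fin (m+1) => (0:ℝ) * g z.1) ∈ F2 := by
      rw [hF2eq]; exact ⟨g, hg, 0, le_refl 0, zero_le_one, rfl⟩
    have hf10 : (f1 + (fun z : X × Fin (m+1) => (0:ℝ) * g z.1) + Function.const _ (0:ℝ)) ∈ F := by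
      rw [hFeq]; exact ⟨f1, hf1, _, hzero2, 0, rfl⟩
    obtain ⟨B1, hB1'⟩ := hFbd _ hf10
    have hB1 : ∀ z, |f1 z| ≤ |B1| := by
      intro z
      have h := hB1' z
      simp only [Pi.add_apply, Function.const_apply, zero_mul, add_zero] at h
      exact le_trans h (le_abs_self B1)
    have hB2 : ∀ z : X × Fin (m + 1), |aa * g z.1| ≤ |B| + |B1| + |c| := by
      intro z
      have h := hB z
      simp only [Pi.add_apply, Function.const_apply] at h
      have h' := le_trans h (le_abs_self B)
      have habs : |aa * g z.1| ≤ |f1 z + aa * g z.1 + c| + (|f1 z| + |c|) := by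
        have he : |aa * g z.1| = |(f1 z + aa * g z.1 + c) + (-(f1 z) + -c)| := by
          congr 1
          ring
        rw [he]
        refine (abs_add_le _ _).trans ?_
        have h2 : |(-(f1 z)) + -c| ≤ |f1 z| + |c| := by
          refine (abs_add_le _ _).trans ?_
          rw [abs_neg, abs_neg]
        exact add_le_add_right h2 _
      have hf1z := hB1 z
      linarith
    have hTf1 : chanOp T f1 ∈ F1 := hF1inv T hTnorm f1 hf1
    have hf2' : (fun z : X × Fin (m+1) => (aa/κ) * g z.1) ∈ F2 := by
      rw [hF2eq]
      refine ⟨g, hg, aa/κ, div_nonneg haa0 hκ0.le, ?_, rfl⟩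
      rw [div_le_one hκ0]; linarith
    refine ⟨chanOp T f1 + (fun z => (aa/κ) * g z.1) + Function.const _ (0:ℝ), ?_, ?_⟩
    · rw [hFeq]; exact ⟨_, hTf1, _, hf2', 0, rfl⟩
    have hbT : ∀ z, |chanOp T f1 z| ≤ (∑ i, ∑ j, |T i j|) * |B1| := chanOp_bound T f1 |B1| hB1
    have hb2' : ∀ z : X × Fin (m + 1), |(aa/κ) * g z.1| ≤ |B| + |B1| + |c| := by
      intro z
      have he : (aa/κ) * g z.1 = (aa * g z.1) / κ := by ring
      rw [he, abs_div, abs_of_pos hκ0]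
      exact le_trans (div_le_self (abs_nonneg _) hκ1) (hB2 z)
    have eP := hsplit P hPnn hPs hP1 f1 (fun z => aa * g z.1) |B1| (|B| + |B1| + |c|) hB1 hB2 c
    have eQ := hsplit Q hQnn hQs hQ1 f1 (fun z => aa * g z.1) |B1| (|B| + |B1| + |c|) hB1 hB2 c
    have ePt := hsplit Pt hPtnn hPts hPt1 (chanOp T f1) (fun z => (aa/κ) * g z.1)
      ((∑ i, ∑ j, |T i j|) * |B1|) (|B| + |B1| + |c|) hbT hb2' 0
    have eQt := hsplit Qt hQtnn hQts hQt1 (chanOp T f1) (fun z => (aa/κ) * g z.1)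
      ((∑ i, ∑ j, |T i j|) * |B1|) (|B| + |B1| + |c|) hbT hb2' 0
    have rP1 : ∑' z, Pt z * chanOp T f1 z = κ⁻¹ * ∑' z, P z * f1 z := by
      rw [hPtdef, E_corrupt P hPnn hPs C (chanOp T f1) _ hbT]
      have h1 : ∀ z, P z * chanOp C (chanOp T f1) z = κ⁻¹ * (P z * f1 z) := by
        intro z
        simp only [hchanCT f1]
        ring
      rw [tsum_congr h1, tsum_mul_left]
    have rQ1 : ∑' z, Qt z * chanOp T f1 z = κ⁻¹ * ∑' z, Q z * f1 z := by
      rw [hQtdef, E_corrupt Q hQnn hQs C (chanOp T f1) _ hbT]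
      have h1 : ∀ z, Q z * chanOp C (chanOp T f1) z = κ⁻¹ * (Q z * f1 z) := by
        intro z
        simp only [hchanCT f1]
        ring
      rw [tsum_congr h1, tsum_mul_left]
    have hfst : chanOp C (fun z : X × Fin (m+1) => (aa/κ) * g z.1)
        = fun z => (aa/κ) * g z.1 := chanOp_fst C hrowC (fun x => (aa/κ) * g x)
    have rP2 : ∑' z, Pt z * ((aa/κ) * g z.1) = κ⁻¹ * ∑' z, P z * (aa * g z.1) := by
      rw [hPtdef, E_corrupt P hPnn hPs C (fun z => (aa/κ) * g z.1) _ hb2']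
      have h1 : ∀ z : X × Fin (m+1),
          P z * chanOp C (fun z : X × Fin (m+1) => (aa/κ) * g z.1) z
            = κ⁻¹ * (P z * (aa * g z.1)) := by
        intro z
        simp only [hfst]
        field_simp
      rw [tsum_congr h1, tsum_mul_left]
    have rQ2 : ∑' z, Qt z * ((aa/κ) * g z.1) = κ⁻¹ * ∑' z, Q z * (aa * g z.1) := by
      rw [hQtdef, E_corrupt Q hQnn hQs C (fun z => (aa/κ) * g z.1) _ hb2']
      have h1 : ∀ z : X × Fin (m+1),
          Q z * chanOp C (fun z : X × Fin (m+1) => (aa/κ) * g z.1) z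
            = κ⁻¹ * (Q z * (aa * g z.1)) := by
        intro z
        simp only [hfst]
        field_simp
      rw [tsum_congr h1, tsum_mul_left]
    simp only [Pi.add_apply, Function.const_apply]
    rw [eP, eQ, ePt, eQt, rP1, rQ1, rP2, rQ2]
    linear_combination (-(∑' z, P z * f1 z) - (∑' z, P z * (aa * g z.1)) + (∑' z, Q z * f1 z)
      + (∑' z, Q z * (aa * g z.1))) * mul_inv_cancel₀ hκ0'
  -- Claim B
  have claimB : ∀ f ∈ F, ∃ f'' ∈ F,
      ((∑' z, Pt z * f z) - ∑' z, Qt z * f z)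
        = ((∑' z, P z * f'' z) - ∑' z, Q z * f'' z) := by
    intro f hfF
    obtain ⟨B, hB⟩ := hFbd _ hfF
    have hB' : ∀ z, |f z| ≤ |B| := fun z => le_trans (hB z) (le_abs_self B)
    rw [hFeq] at hfF
    obtain ⟨f1, hf1, f2, hf2, c, rfl⟩ := hfF
    refine ⟨chanOp C f1 + f2 + Function.const _ c, ?_, ?_⟩
    · rw [hFeq]; exact ⟨_, hF1inv C hCnorm f1 hf1, f2, hf2, c, rfl⟩
    · have hf2eq := hf2
      rw [hF2eq] at hf2eq
      obtain ⟨g, hg, aa, _, _, hf2form⟩ := hf2eq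
      have hconstc : chanOp C (Function.const (X × Fin (m+1)) c) = Function.const _ c := by
        funext z
        show ∑ j, C z.2 j * c = c
        rw [← Finset.sum_mul, hrowC, one_mul]
      have hchan : chanOp C (f1 + f2 + Function.const _ c)
          = chanOp C f1 + f2 + Function.const _ c := by
        rw [chanOp_add, chanOp_add, hconstc, hf2form,
          chanOp_fst C hrowC (fun x => aa * g x)]
      rw [hPtdef, hQtdef, E_corrupt P hPnn hPs C _ |B| hB', E_corrupt Q hQnn hQs C _ |B| hB',
        hchan]
  -- Conclusion
  unfold nnDist
  rcases Set.eq_empty_or_nonempty F with hFe | hFne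
  · rw [hFe]
    simp [Real.sSup_empty]
  · by_cases hbddSt : BddAbove ((fun f => (∑' z, Pt z * f z) - ∑' z, Qt z * f z) '' F)
    · apply csSup_le (hFne.image _)
      rintro x ⟨f, hfF, rfl⟩
      obtain ⟨f', hf', heq⟩ := claimA f hfF
      dsimp only
      rw [heq]
      have hle' : ((∑' z, Pt z * f' z) - ∑' z, Qt z * f' z)
          ≤ sSup ((fun f => (∑' z, Pt z * f z) - ∑' z, Qt z * f z) '' F) :=
        le_csSup hbddSt ⟨f', hf', rfl⟩
      exact mul_le_mul_of_nonneg_left hle' hκ0.le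
    · have hbddS : ¬ BddAbove ((fun f => (∑' z, P z * f z) - ∑' z, Q z * f z) '' F) := by
        rintro ⟨b, hb⟩
        apply hbddSt
        refine ⟨b, ?_⟩
        rintro x ⟨f, hfF, rfl⟩
        obtain ⟨f'', hf'', heq⟩ := claimB f hfF
        dsimp only
        rw [heq]
        exact hb ⟨f'', hf'', rfl⟩
      rw [Real.sSup_of_not_bddAbove hbddS, Real.sSup_of_not_bddAbove hbddSt, mul_zero]
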